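/- Let n ≥ 2 with prime factorization n = p1^{e1} ⋯ pk^{ek}, and let Q_{4n} = ⟨x, y : x^{2n} = 1, x^n = y^2, y^{-1}xy = x^{-1}⟩ be the dicyclic group of order 4n. If n is not a power of 2, then ι(Q_{4n}) = k + 1; if n is a power of 2, then ι(Q_{4n}) = 2. -/

import Mathlib

/-- The intersection number of a group: the minimum number of maximal subgroups
whose intersection equals the Frattini subgroup. -/
noncomputable def interNum (G : Type*) [Group G] : ℕ :=
  sInf {n | ∃ s : Finset (Subgroup G), s.card = n ∧ (∀ M ∈ s, IsCoatom M) ∧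
    s.inf id = frattini G}


namespace IotaDicyclic
open QuaternionGroup

variable {n : ℕ}

/-- The cyclic subgroup ⟨a 1⟩ of all `a i`. -/
def A (n : ℕ) : Subgroup (QuaternionGroup n) where
  carrier := {g | ∃ i, g = a i}
  one_mem' := ⟨0, rfl⟩
  mul_mem' := by
    rintro _ _ ⟨i, rfl⟩ ⟨j, rfl⟩
    exact ⟨i + j, rfl⟩
  inv_mem' := by
    rintro _ ⟨i, rfl⟩
    exact ⟨-i, rfl⟩

@[simp] lemma a_mem_A (i : ZMod (2 * n)) : a i ∈ A n := ⟨i, rfl⟩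

@[simp] lemma xa_not_mem_A (i : ZMod (2 * n)) : xa i ∉ A n := by
  rintro ⟨j, h⟩
  exact absurd h (by simp)

section S
variable (n)

/-- The "dicyclic" subgroup of index p: `a i` with p ∣ i, and `xa i` with i ≡ c mod p. -/
def S (p : ℕ) (hp : p ∣ n) (c : ZMod p) : Subgroup (QuaternionGroup n) where
  carrier := {g | match g with
    | .a i => ZMod.castHom (hp.mul_left 2) (ZMod p) i = 0
    | .xa i => ZMod.castHom (hp.mul_left 2) (ZMod p) i = c}
  one_mem' := by
    show ZMod.castHom (hp.mul_left 2) (ZMod p) 0 = 0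
    simp
  mul_mem' := by
    rintro (i | i) (j | j) hi hj <;>
      simp only [Set.mem_setOf_eq, a_mul_a, a_mul_xa, xa_mul_a, xa_mul_xa] at * <;>
      simp [map_add, map_sub, hi, hj, (ZMod.natCast_eq_zero_iff n p).2 hp]
  inv_mem' := by
    rintro (i | i) hi <;>
      simp only [Set.mem_setOf_eq] at * <;>
      [skip; skip]
    · show ZMod.castHom (hp.mul_left 2) (ZMod p) (-i) = 0
      rw [map_neg, hi, neg_zero]
    · show ZMod.castHom (hp.mul_left 2) (ZMod p) ((n : ZMod (2*n)) + i) = c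
      rw [map_add, hi, map_natCast, (ZMod.natCast_eq_zero_iff n p).2 hp, zero_add]

variable {p : ℕ} (hp : p ∣ n) (c : ZMod p)

@[simp] lemma a_mem_S {i : ZMod (2 * n)} :
    a i ∈ S n p hp c ↔ ZMod.castHom (hp.mul_left 2) (ZMod p) i = 0 := Iff.rfl

@[simp] lemma xa_mem_S {i : ZMod (2 * n)} :
    xa i ∈ S n p hp c ↔ ZMod.castHom (hp.mul_left 2) (ZMod p) i = c := Iff.rfl

end S

/-- The claimed Frattini subgroup: all `a i` with rad(n) ∣ i. -/
def Phi (n : ℕ) : Subgroup (QuaternionGroup n) where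
  carrier := {g | match g with
    | .a i => ZMod.castHom ((Nat.prod_primeFactors_dvd n).mul_left 2) (ZMod (∏ p ∈ n.primeFactors, p)) i = 0
    | .xa _ => False}
  one_mem' := by
    show ZMod.castHom _ _ 0 = 0
    simp
  mul_mem' := by
    rintro (i | i) (j | j) hi hj <;>
      simp only [Set.mem_setOf_eq, a_mul_a, a_mul_xa, xa_mul_a, xa_mul_xa] at * <;>
      simp [map_add, hi, hj]
  inv_mem' := by
    rintro (i | i) hi <;> simp only [Set.mem_setOf_eq] at *
    · show ZMod.castHom _ _ (-i) = 0
      rw [map_neg, hi, neg_zero]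

@[simp] lemma a_mem_Phi {i : ZMod (2 * n)} :
    a i ∈ Phi n ↔ ZMod.castHom ((Nat.prod_primeFactors_dvd n).mul_left 2)
      (ZMod (∏ p ∈ n.primeFactors, p)) i = 0 := Iff.rfl

@[simp] lemma xa_not_mem_Phi {i : ZMod (2 * n)} : xa i ∉ Phi n := fun h => h

lemma A_ne_top : A n ≠ ⊤ := fun h => xa_not_mem_A (0 : ZMod (2*n)) (h ▸ Subgroup.mem_top _)

lemma isCoatom_A : IsCoatom (A n) := by
  constructor
  · exact A_ne_top
  · intro B hB
    obtain ⟨g, hgB, hgA⟩ := SetLike.exists_of_lt hB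
    obtain (i | j) := g
    · exact absurd (a_mem_A i) hgA
    · rw [eq_top_iff]
      rintro (i | i) -
      · exact hB.le (a_mem_A i)
      · have h1 : a (j - i) ∈ B := hB.le (a_mem_A _)
        have := mul_mem h1 hgB
        rwa [a_mul_xa, sub_sub_cancel] at this

end IotaDicyclic

section Part2
namespace IotaDicyclic
open QuaternionGroup

variable {n p : ℕ} (hp : p ∣ n) {c : ZMod p}

lemma S_ne_top (hp1 : p ≠ 1) {hp : p ∣ n} {c : ZMod p} : S n p hp c ≠ ⊤ := by
  intro h
  have : a (1 : ZMod (2*n)) ∈ S n p hp c := h ▸ Subgroup.mem_top _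
  rw [a_mem_S, map_one] at this
  have := (ZMod.natCast_eq_zero_iff 1 p).1 (by simpa using this)
  exact hp1 (Nat.eq_one_of_dvd_one this)

/-- If a subgroup contains S p c and an element `a u` with cast u ≠ 0, it is everything. -/
lemma eq_top_of_S_le (hpp : p.Prime) {hp : p ∣ n} {c : ZMod p} {B : Subgroup (QuaternionGroup n)}
    (hSB : S n p hp c ≤ B) (u : ZMod (2 * n))
    (huB : a u ∈ B) (hu : ZMod.castHom (hp.mul_left 2) (ZMod p) u ≠ 0) : B = ⊤ := by
  haveI : Fact p.Prime := ⟨hpp⟩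
  haveI : NeZero p := ⟨hpp.ne_zero⟩
  set φ := ZMod.castHom (hp.mul_left 2) (ZMod p) with hφ
  have haB : ∀ m : ZMod (2 * n), a m ∈ B := by
    intro m
    set k : ℕ := (φ m * (φ u)⁻¹).val with hk
    have h1 : a (m - (k : ZMod (2*n)) * u) ∈ B := by
      apply hSB
      rw [a_mem_S, map_sub, map_mul, map_natCast, hk, ZMod.natCast_zmod_val,
        mul_assoc, inv_mul_cancel₀ hu, mul_one, sub_self]
    have h2 : (a u) ^ k ∈ B := pow_mem huB k
    have h3 : (a u) ^ k = a ((k : ZMod (2*n)) * u) := by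
      induction k with
      | zero => simp
      | succ t ih => rw [pow_succ, ih, a_mul_a]; push_cast; ring_nf
    have := mul_mem h1 (h3 ▸ h2)
    rwa [a_mul_a, sub_add_cancel] at this
  rw [eq_top_iff]
  rintro (i | i) -
  · exact haB i
  · have hw : xa ((c.val : ZMod (2*n))) ∈ B := by
      apply hSB
      rw [xa_mem_S, map_natCast, ZMod.natCast_zmod_val]
    have := mul_mem (haB ((c.val : ZMod (2*n)) - i)) hw
    rwa [a_mul_xa, sub_sub_cancel] at this

lemma isCoatom_S (hpp : p.Prime) {hp : p ∣ n} (c : ZMod p) : IsCoatom (S n p hp c) := by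
  haveI : Fact p.Prime := ⟨hpp⟩
  haveI : NeZero p := ⟨hpp.ne_zero⟩
  constructor
  · exact S_ne_top hpp.ne_one
  · intro B hB
    obtain ⟨g, hgB, hgS⟩ := SetLike.exists_of_lt hB
    set φ := ZMod.castHom (hp.mul_left 2) (ZMod p) with hφ
    obtain (i | i) := g
    · exact eq_top_of_S_le hpp hB.le i hgB (by simpa using hgS)
    · have hw : xa ((c.val : ZMod (2*n))) ∈ B := by
        apply hB.le
        rw [xa_mem_S, map_natCast, ZMod.natCast_zmod_val]
      have h2 : a ((c.val : ZMod (2*n)) - i) ∈ B := by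
        have := mul_mem hgB (inv_mem hw)
        have hinv : (xa ((c.val : ZMod (2*n))))⁻¹ = xa ((n : ZMod (2*n)) + (c.val : ZMod (2*n))) := rfl
        have hnn : (n : ZMod (2*n)) + (n : ZMod (2*n)) = 0 := by
          rw [← Nat.cast_add, ← two_mul, ZMod.natCast_self]
        rw [hinv, xa_mul_xa] at this
        convert this using 2
        rw [← add_assoc, hnn, zero_add]
      apply eq_top_of_S_le hpp hB.le _ h2
      rw [map_sub, map_natCast, ZMod.natCast_zmod_val, sub_ne_zero]
      intro h
      exact hgS (by rw [xa_mem_S, ← h])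

end IotaDicyclic
end Part2

section Part3
namespace IotaDicyclic
open QuaternionGroup

variable {n : ℕ}

lemma a_pow (i : ZMod (2*n)) (k : ℕ) : (a i)^k = a ((k : ZMod (2*n)) * i) := by
  induction k with
  | zero => simp
  | succ t ih => rw [pow_succ, ih, a_mul_a]; push_cast; ring_nf

lemma eq_top_of_a_one_xa_mem (hn0 : n ≠ 0) {M : Subgroup (QuaternionGroup n)}
    (h1 : a (1 : ZMod (2*n)) ∈ M) {j : ZMod (2*n)} (hj : xa j ∈ M) : M = ⊤ := by
  haveI : NeZero (2 * n) := ⟨by omega⟩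
  have haM : ∀ i : ZMod (2*n), a i ∈ M := by
    intro i
    have := pow_mem h1 i.val
    rwa [a_pow, mul_one, ZMod.natCast_zmod_val] at this
  rw [eq_top_iff]
  rintro (i | i) -
  · exact haM i
  · have := mul_mem (haM (j - i)) hj
    rwa [a_mul_xa, sub_sub_cancel] at this

lemma classify (hn : 2 ≤ n) {M : Subgroup (QuaternionGroup n)} (hM : IsCoatom M) :
    M = A n ∨ ∃ p, ∃ hp : p ∣ n, p.Prime ∧ ∃ c, M = S n p hp c := by
  classical
  haveI : NeZero (2 * n) := ⟨by omega⟩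
  by_cases hxa : ∃ j, xa j ∈ M
  · obtain ⟨j, hj⟩ := hxa
    right
    have hex : ∃ k, 0 < k ∧ a ((k : ℕ) : ZMod (2*n)) ∈ M :=
      ⟨2*n, by omega, by rw [ZMod.natCast_self]; exact (one_def ▸ M.one_mem : a 0 ∈ M)⟩
    set d := Nat.find hex with hdd
    obtain ⟨hdpos, hdmem⟩ : 0 < d ∧ a ((d : ℕ) : ZMod (2*n)) ∈ M := Nat.find_spec hex
    have hdvd : ∀ m : ℕ, a ((m : ZMod (2*n))) ∈ M → d ∣ m := by
      intro m hm
      have hmod : d * (m / d) + m % d = m := Nat.div_add_mod m d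
      have hpow : a ((d * (m / d) : ℕ) : ZMod (2*n)) ∈ M := by
        have := pow_mem hdmem (m / d)
        rwa [a_pow, ← Nat.cast_mul, mul_comm (m/d) d] at this
      have hr : a ((m % d : ℕ) : ZMod (2*n)) ∈ M := by
        have := mul_mem hm (inv_mem hpow)
        have he : ((d * (m / d) : ℕ) : ZMod (2*n)) + ((m % d : ℕ) : ZMod (2*n))
            = (m : ZMod (2*n)) := by rw [← Nat.cast_add, hmod]
        have he2 : ((m : ZMod (2*n))) + -((d * (m / d) : ℕ) : ZMod (2*n))
            = ((m % d : ℕ) : ZMod (2*n)) := by rw [← he]; ring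
        rwa [show (a ((d * (m / d) : ℕ) : ZMod (2*n)))⁻¹
              = a (-((d * (m / d) : ℕ) : ZMod (2*n))) from rfl, a_mul_a, he2] at this
      by_contra hndvd
      have hrpos : 0 < m % d := Nat.pos_of_ne_zero fun h => hndvd (Nat.dvd_of_mod_eq_zero h)
      exact Nat.find_min hex (Nat.mod_lt m hdpos) ⟨hrpos, hr⟩
    have hd1 : d ≠ 1 := by
      intro h
      apply hM.1
      apply eq_top_of_a_one_xa_mem (by omega) _ hj
      have := hdmem
      rwa [h, Nat.cast_one] at this
    have hdn : d ∣ n := by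
      apply hdvd
      have := pow_mem hj 2
      rwa [xa_sq] at this
    set p := d.minFac with hpdef
    have hpp : p.Prime := Nat.minFac_prime hd1
    have hpd : p ∣ d := Nat.minFac_dvd d
    have hp : p ∣ n := hpd.trans hdn
    set φ := ZMod.castHom (hp.mul_left 2) (ZMod p) with hφ
    have hdvdcast : ∀ i : ZMod (2*n), a i ∈ M → φ i = 0 := by
      intro i hi
      have h1 : d ∣ i.val := hdvd i.val (by rwa [ZMod.natCast_zmod_val])
      rw [← ZMod.natCast_zmod_val i, map_natCast, ZMod.natCast_eq_zero_iff]
      exact hpd.trans h1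
    refine ⟨p, hp, hpp, φ j, ?_⟩
    have hMS : M ≤ S n p hp (φ j) := by
      intro g hg
      cases g with
      | a i => exact hdvdcast i hg
      | xa i =>
          have hnn : (n : ZMod (2*n)) + (n : ZMod (2*n)) = 0 := by
            rw [← Nat.cast_add, ← two_mul, ZMod.natCast_self]
          have hmem : a (j - i) ∈ M := by
            have := mul_mem hg (inv_mem hj)
            have hinv : (xa j)⁻¹ = xa ((n : ZMod (2*n)) + j) := rfl
            rw [hinv, xa_mul_xa, ← add_assoc, hnn, zero_add] at this
            exact this
          have := hdvdcast _ hmem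
          rw [map_sub, sub_eq_zero] at this
          rw [xa_mem_S, ← this]
    rcases hMS.lt_or_eq with h | h
    · exact absurd (hM.2 _ h) (S_ne_top hpp.ne_one)
    · exact h
  · left
    have hMA : M ≤ A n := by
      intro g hg
      cases g with
      | a i => exact a_mem_A i
      | xa i => exact absurd ⟨i, hg⟩ hxa
    rcases hMA.lt_or_eq with h | h
    · exact absurd (hM.2 _ h) A_ne_top
    · exact h

end IotaDicyclic
end Part3

section Part4
namespace IotaDicyclic
open QuaternionGroup

variable {n : ℕ}

lemma mem_finset_inf {G : Type*} [Group G] {s : Finset (Subgroup G)} {g : G} :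
    g ∈ s.inf id ↔ ∀ M ∈ s, g ∈ M := by
  simp [Finset.inf_eq_iInf, Subgroup.mem_iInf]

lemma Phi_le_A : Phi n ≤ A n := by
  rintro (i | i) hg
  exacts [a_mem_A i, absurd hg (xa_not_mem_Phi)]

lemma Phi_le_S (hn : 2 ≤ n) {p : ℕ} (hpp : p.Prime) (hp : p ∣ n) (c : ZMod p) :
    Phi n ≤ S n p hp c := by
  rintro (i | i) hg
  · rw [a_mem_S]
    rw [a_mem_Phi] at hg
    have hpr : p ∣ ∏ q ∈ n.primeFactors, q :=
      Finset.dvd_prod_of_mem _ (Nat.mem_primeFactors.mpr ⟨hpp, hp, by omega⟩)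
    have hcomp : ZMod.castHom (hp.mul_left 2) (ZMod p) i
        = ZMod.castHom hpr (ZMod p)
          (ZMod.castHom ((Nat.prod_primeFactors_dvd n).mul_left 2)
            (ZMod (∏ q ∈ n.primeFactors, q)) i) := by
      rw [← RingHom.comp_apply, ZMod.castHom_comp]
    rw [hcomp, hg, map_zero]
  · exact absurd hg (xa_not_mem_Phi)

lemma mem_Phi_of (hn : 2 ≤ n) {g : QuaternionGroup n} (hA : g ∈ A n)
    (hS : ∀ p (hpf : p ∈ n.primeFactors),
      g ∈ S n p (Nat.dvd_of_mem_primeFactors hpf) (0 : ZMod p)) :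
    g ∈ Phi n := by
  haveI : NeZero (2*n) := ⟨by omega⟩
  obtain ⟨i, rfl⟩ := hA
  rw [a_mem_Phi, ← ZMod.natCast_zmod_val i, map_natCast, ZMod.natCast_eq_zero_iff]
  refine Finset.prod_primes_dvd _ (fun p hp => (Nat.prime_of_mem_primeFactors hp).prime) ?_
  intro p hpf
  have := hS p hpf
  rw [a_mem_S, ← ZMod.natCast_zmod_val i, map_natCast,
    ZMod.natCast_eq_zero_iff] at this
  exact this

lemma frattini_eq (hn : 2 ≤ n) : frattini (QuaternionGroup n) = Phi n := by
  apply le_antisymm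
  · intro g hg
    have hA : g ∈ A n := frattini_le_coatom isCoatom_A hg
    apply mem_Phi_of hn hA
    intro p hpf
    exact frattini_le_coatom
      (isCoatom_S (Nat.prime_of_mem_primeFactors hpf) (0 : ZMod p)) hg
  · rw [frattini, Order.radical]
    refine le_iInf fun M => le_iInf fun hM => ?_
    rcases classify hn hM with rfl | ⟨p, hp, hpp, c, rfl⟩
    · exact Phi_le_A
    · exact Phi_le_S hn hpp hp c

lemma S_inj (hn : 2 ≤ n) {p q : ℕ} (hpp : p.Prime) (hqp : q.Prime)
    {hp : p ∣ n} {hq : q ∣ n} {c : ZMod p} {c' : ZMod q}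
    (h : S n p hp c = S n q hq c') : p = q := by
  have hmem : a ((p : ℕ) : ZMod (2*n)) ∈ S n p hp c := by
    rw [a_mem_S, map_natCast, ZMod.natCast_self]
  rw [h, a_mem_S, map_natCast, ZMod.natCast_eq_zero_iff] at hmem
  exact ((Nat.prime_dvd_prime_iff_eq hqp hpp).mp hmem).symm

lemma A_ne_S (hn : 2 ≤ n) {p : ℕ} (hpp : p.Prime) {hp : p ∣ n} {c : ZMod p} :
    A n ≠ S n p hp c := by
  haveI : NeZero p := ⟨hpp.ne_zero⟩
  intro h
  have : xa ((c.val : ℕ) : ZMod (2*n)) ∈ S n p hp c := by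
    rw [xa_mem_S, map_natCast, ZMod.natCast_zmod_val]
  rw [← h] at this
  exact xa_not_mem_A _ this

lemma crt (t : Finset ℕ) (hpr : ∀ p ∈ t, p.Prime) (c : ∀ q : ℕ, ZMod q) :
    ∃ j : ℤ, ∀ p ∈ t, ((j : ZMod p)) = c p := by
  classical
  induction t using Finset.induction_on with
  | empty => exact ⟨0, by simp⟩
  | @insert q t hqt ih =>
    obtain ⟨j, hj⟩ := ih fun p hp => hpr p (Finset.mem_insert_of_mem hp)
    haveI : Fact q.Prime := ⟨hpr q (Finset.mem_insert_self q t)⟩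
    set P : ℕ := ∏ p ∈ t, p with hP
    have hPq : (P : ZMod q) ≠ 0 := by
      rw [Ne, ZMod.natCast_eq_zero_iff]
      intro hdvd
      obtain ⟨p, hp, hqp⟩ := (hpr q (Finset.mem_insert_self q t)).prime.exists_mem_finset_dvd hdvd
      exact hqt (((Nat.prime_dvd_prime_iff_eq (hpr q (Finset.mem_insert_self q t))
        (hpr p (Finset.mem_insert_of_mem hp))).mp hqp) ▸ hp)
    set u : ZMod q := (c q - (j : ZMod q)) * (P : ZMod q)⁻¹ with hu
    refine ⟨j + P * u.val, fun p hp => ?_⟩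
    rcases Finset.mem_insert.mp hp with rfl | hp'
    · push_cast
      rw [ZMod.natCast_zmod_val, hu, ← mul_assoc, mul_comm ((P : ZMod p)),
        mul_assoc, mul_inv_cancel₀ hPq, mul_one]
      ring
    · push_cast
      rw [(ZMod.natCast_eq_zero_iff P p).mpr (Finset.dvd_prod_of_mem _ hp'),
        zero_mul, add_zero, hj p hp']

end IotaDicyclic
end Part4

section Part5
namespace IotaDicyclic
open QuaternionGroup

variable {n : ℕ}

lemma upper (hn : 2 ≤ n) :
    ∃ s : Finset (Subgroup (QuaternionGroup n)), s.card = n.primeFactors.card + 1 ∧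
      (∀ M ∈ s, IsCoatom M) ∧ s.inf id = frattini (QuaternionGroup n) := by
  classical
  set W : Finset (Subgroup (QuaternionGroup n)) :=
    insert (A n) (n.primeFactors.attach.image
      (fun q => S n q.1 (Nat.dvd_of_mem_primeFactors q.2) (0 : ZMod q.1))) with hW
  have hinj : Function.Injective
      (fun q : {q // q ∈ n.primeFactors} =>
        S n q.1 (Nat.dvd_of_mem_primeFactors q.2) (0 : ZMod q.1)) := by
    intro q r h
    exact Subtype.ext (S_inj hn (Nat.prime_of_mem_primeFactors q.2)
      (Nat.prime_of_mem_primeFactors r.2) h)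
  refine ⟨W, ?_, ?_, ?_⟩
  · rw [hW, Finset.card_insert_of_notMem, Finset.card_image_of_injective _ hinj,
      Finset.card_attach]
    intro hmem
    obtain ⟨q, -, heq⟩ := Finset.mem_image.mp hmem
    exact A_ne_S hn (Nat.prime_of_mem_primeFactors q.2) heq.symm
  · intro M hM
    rw [hW, Finset.mem_insert] at hM
    rcases hM with rfl | hM
    · exact isCoatom_A
    · obtain ⟨q, -, rfl⟩ := Finset.mem_image.mp hM
      exact isCoatom_S (Nat.prime_of_mem_primeFactors q.2) _
  · rw [frattini_eq hn]
    apply le_antisymm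
    · intro g hg
      rw [mem_finset_inf] at hg
      refine mem_Phi_of hn (hg _ (by rw [hW]; exact Finset.mem_insert_self _ _)) ?_
      intro p hpf
      exact hg _ (by
        rw [hW]
        exact Finset.mem_insert_of_mem
          (Finset.mem_image.mpr ⟨⟨p, hpf⟩, Finset.mem_attach _ _, rfl⟩))
    · apply Finset.le_inf
      intro M hM
      rw [hW, Finset.mem_insert] at hM
      rcases hM with rfl | hM
      · exact Phi_le_A
      · obtain ⟨q, -, rfl⟩ := Finset.mem_image.mp hM
        exact Phi_le_S hn (Nat.prime_of_mem_primeFactors q.2) _ _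

lemma lower (hn : 2 ≤ n) (s : Finset (Subgroup (QuaternionGroup n)))
    (hco : ∀ M ∈ s, IsCoatom M) (hinf : s.inf id = frattini (QuaternionGroup n)) :
    n.primeFactors.card + 1 ≤ s.card := by
  classical
  haveI : NeZero (2*n) := ⟨by omega⟩
  rw [frattini_eq hn] at hinf
  have hstep : ∀ p ∈ n.primeFactors, ∃ M, M ∈ s ∧ ∃ hp : p ∣ n, ∃ c, M = S n p hp c := by
    intro p hpf
    by_contra hcon
    push_neg at hcon
    set m : ℕ := ∏ q ∈ n.primeFactors.erase p, q with hm
    have hmmem : a ((m : ℕ) : ZMod (2*n)) ∈ s.inf id := by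
      rw [mem_finset_inf]
      intro M hM
      rcases classify hn (hco M hM) with rfl | ⟨q, hq, hqp, cc, rfl⟩
      · exact a_mem_A _
      · have hqne : q ≠ p := by rintro rfl; exact hcon _ hM hq cc rfl
        rw [a_mem_S, map_natCast, ZMod.natCast_eq_zero_iff]
        exact Finset.dvd_prod_of_mem _
          (Finset.mem_erase.mpr ⟨hqne, Nat.mem_primeFactors.mpr ⟨hqp, hq, by omega⟩⟩)
    rw [hinf, a_mem_Phi, map_natCast, ZMod.natCast_eq_zero_iff] at hmmem
    have hrad : ∏ q ∈ n.primeFactors, q = p * m := (Finset.mul_prod_erase _ _ hpf).symm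
    have hmpos : 0 < m := Finset.prod_pos fun q hq =>
      (Nat.prime_of_mem_primeFactors (Finset.mem_of_mem_erase hq)).pos
    have hple : 2 ≤ p := (Nat.prime_of_mem_primeFactors hpf).two_le
    have hle := Nat.le_of_dvd hmpos (hrad ▸ hmmem)
    nlinarith
  have hch : ∀ q : {q // q ∈ n.primeFactors},
      ∃ M, M ∈ s ∧ ∃ hp : (q : ℕ) ∣ n, ∃ c, M = S n q hp c := fun q => hstep q.1 q.2
  choose f hfs hfd c hfeq using hch
  by_contra hcard
  push_neg at hcard
  have hcle : s.card ≤ n.primeFactors.attach.card := by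
    rw [Finset.card_attach]; omega
  have hsurj := Finset.surj_on_of_inj_on_of_card_le (s := n.primeFactors.attach) (t := s)
    (fun q _ => f q) (fun q _ => hfs q)
    (fun q r _ _ h => Subtype.ext (S_inj hn (Nat.prime_of_mem_primeFactors q.2)
      (Nat.prime_of_mem_primeFactors r.2)
      (show S n q.1 (hfd q) (c q) = S n r.1 (hfd r) (c r) by
        rw [← hfeq q, ← hfeq r]; exact h)))
    hcle
  obtain ⟨j, hj⟩ := crt n.primeFactors (fun q hq => Nat.prime_of_mem_primeFactors hq)
    (fun q => if h : q ∈ n.primeFactors then c ⟨q, h⟩ else 0)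
  have hxmem : xa (((j : ℤ) : ZMod (2*n))) ∈ s.inf id := by
    rw [mem_finset_inf]
    intro M hM
    obtain ⟨q, -, rfl⟩ := hsurj M hM
    show xa (((j : ℤ) : ZMod (2*n))) ∈ f q
    rw [hfeq q, xa_mem_S, map_intCast, hj q.1 q.2, dif_pos q.2]
  rw [hinf] at hxmem
  exact xa_not_mem_Phi hxmem

lemma interNum_eq (hn : 2 ≤ n) :
    interNum (QuaternionGroup n) = n.primeFactors.card + 1 := by
  obtain ⟨W, hc, hco, hinf⟩ := upper hn
  have hne : {k | ∃ s : Finset (Subgroup (QuaternionGroup n)), s.card = k ∧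
      (∀ M ∈ s, IsCoatom M) ∧ s.inf id = frattini (QuaternionGroup n)}.Nonempty :=
    ⟨n.primeFactors.card + 1, W, hc, hco, hinf⟩
  apply le_antisymm
  · exact Nat.sInf_le ⟨W, hc, hco, hinf⟩
  · apply le_csInf hne
    rintro m ⟨s, rfl, hco', hinf'⟩
    exact lower hn s hco' hinf'

end IotaDicyclic
end Part5


/-- `QuaternionGroup n` is the dicyclic group of order `4 * n`. -/
theorem interNum_dicyclic (n : ℕ) (hn : 2 ≤ n) :
    (¬ (∃ m, n = 2 ^ m) → interNum (QuaternionGroup n) = n.primeFactors.card + 1) ∧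
    ((∃ m, n = 2 ^ m) → interNum (QuaternionGroup n) = 2) := by
  constructor
  · intro _
    exact IotaDicyclic.interNum_eq hn
  · rintro ⟨m, rfl⟩
    have hm : m ≠ 0 := by rintro rfl; omega
    rw [IotaDicyclic.interNum_eq hn, Nat.primeFactors_pow 2 hm,
      Nat.Prime.primeFactors Nat.prime_two]
    simp
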